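/- Let c : X* → ℝ be a formal power series whose coefficients satisfy |(c,η)| ≤ K M^{|η|} |η|! for all words η (local convergence bound), let u : [t0, t0+T] → ℝ^m be measurable with |u_i(t)| ≤ R a.e., and set R̄ := max(R,1). If (m+1) M R̄ T < 1, then for every t ∈ [t0, t0+T] the family (|(c,η)| · |E_η[u](t,t0)|)_{η ∈ X*} is summable, and the Fliess series F_c[u](t) = Σ_{η ∈ X*} (c,η) E_η[u](t,t0) satisfies |F_c[u](t)| ≤ K / (1 − (m+1) M R̄ (t − t0)). -/

import Mathlib

open MeasureTheory

/-- Extend `u : ℝ → ℝ^m` to the alphabet `X = {x_0, x_1, …, x_m}` by `u_0 ≡ 1`. -/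
noncomputable def uext (m : ℕ) (u : ℝ → Fin m → ℝ) : ℝ → Fin (m + 1) → ℝ :=
  fun t => Fin.cases 1 (fun j => u t j)

/-- Iterated integrals `E_η[u](t, t0)`: `E_∅[u] ≡ 1` and
`E_{x_i η̄}[u](t,t0) = ∫_{t0}^t u_i(τ) E_{η̄}[u](τ,t0) dτ`. -/
noncomputable def iterInt (m : ℕ) (u : ℝ → Fin m → ℝ) (t0 : ℝ) :
    List (Fin (m + 1)) → ℝ → ℝ
  | [] => fun _ => 1
  | i :: w => fun t => ∫ τ in t0..t, uext m u τ i * iterInt m u t0 w τ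

lemma integral_sub_pow (t0 t : ℝ) (n : ℕ) :
    ∫ τ in t0..t, (τ - t0) ^ n = (t - t0) ^ (n + 1) / (n + 1) := by
  rw [intervalIntegral.integral_comp_sub_right (fun x => x ^ n) t0, sub_self, integral_pow]
  simp

lemma iterInt_cont_bound (m : ℕ) (t0 T R : ℝ) (hT : 0 < T)
    (u : ℝ → Fin m → ℝ) (hmeas : ∀ i, Measurable fun t => u t i)
    (hbd : ∀ i, ∀ᵐ t ∂(volume.restrict (Set.Icc t0 (t0 + T))), |u t i| ≤ R) :
    ∀ w : List (Fin (m + 1)),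
      ContinuousOn (iterInt m u t0 w) (Set.Icc t0 (t0 + T)) ∧
      ∀ t ∈ Set.Icc t0 (t0 + T),
        |iterInt m u t0 w t| ≤
          (max R 1) ^ w.length * (t - t0) ^ w.length / (Nat.factorial w.length : ℝ) := by
  set Rb := max R 1 with hRb
  have hRb1 : (1 : ℝ) ≤ Rb := le_max_right _ _
  have hRb0 : (0 : ℝ) ≤ Rb := by linarith
  have hT0 : t0 ≤ t0 + T := by linarith
  intro w
  induction w with
  | nil =>
    constructor
    · exact continuousOn_const
    · intro t ht
      simp [iterInt]
  | cons i w ih =>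
    obtain ⟨hcont, hbnd⟩ := ih
    set n := w.length with hn
    have hub : ∀ᵐ τ ∂(volume.restrict (Set.Icc t0 (t0 + T))), |uext m u τ i| ≤ Rb := by
      induction i using Fin.cases with
      | zero =>
        filter_upwards with τ
        simp [uext]
        exact hRb1
      | succ j =>
        filter_upwards [hbd j] with τ h
        have he : uext m u τ j.succ = u τ j := rfl
        rw [he]
        exact h.trans (le_max_left _ _)
    have hum : Measurable fun τ => uext m u τ i := by
      induction i using Fin.cases with
      | zero =>
        simp only [uext]
        exact measurable_const
      | succ j => simpa [uext] using hmeas j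
    set f : ℝ → ℝ := fun τ => uext m u τ i * iterInt m u t0 w τ with hf
    set g : ℝ → ℝ := fun τ => Rb ^ (n + 1) * (τ - t0) ^ n / (Nat.factorial n : ℝ) with hg
    have hgcont : Continuous g := by fun_prop
    have hfm : AEStronglyMeasurable f (volume.restrict (Set.Icc t0 (t0 + T))) :=
      hum.aestronglyMeasurable.mul (hcont.aestronglyMeasurable measurableSet_Icc)
    have hfact : (0 : ℝ) < (Nat.factorial n : ℝ) := by positivity
    have hdom : ∀ᵐ τ ∂(volume.restrict (Set.Icc t0 (t0 + T))), ‖f τ‖ ≤ g τ := by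
      filter_upwards [hub, ae_restrict_mem measurableSet_Icc] with τ h1 h2
      have h3 := hbnd τ h2
      have h4 : 0 ≤ τ - t0 := by linarith [h2.1]
      calc ‖f τ‖ = |uext m u τ i| * |iterInt m u t0 w τ| := by
            rw [Real.norm_eq_abs, abs_mul]
        _ ≤ Rb * (Rb ^ n * (τ - t0) ^ n / (Nat.factorial n : ℝ)) := by
            apply mul_le_mul h1 h3 (abs_nonneg _) hRb0
        _ = g τ := by simp only [hg]; ring
    have hgint : IntegrableOn g (Set.Icc t0 (t0 + T)) :=
      hgcont.integrableOn_Icc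
    have hfint : IntegrableOn f (Set.Icc t0 (t0 + T)) :=
      Integrable.mono' hgint hfm hdom
    have huIcc : Set.uIcc t0 (t0 + T) = Set.Icc t0 (t0 + T) := Set.uIcc_of_le hT0
    constructor
    · have := intervalIntegral.continuousOn_primitive_interval
        (μ := volume) (f := f) (a := t0) (b := t0 + T) (by rwa [huIcc])
      rw [huIcc] at this
      exact this
    · intro t ht
      have ht0 : t0 ≤ t := ht.1
      have hsub : Set.uIoc t0 t ⊆ Set.Icc t0 (t0 + T) := by
        rw [Set.uIoc_of_le ht0]
        exact fun x hx => ⟨hx.1.le, hx.2.trans ht.2⟩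
      have hdom' : ∀ᵐ τ ∂(volume.restrict (Set.uIoc t0 t)), ‖f τ‖ ≤ g τ :=
        ae_restrict_of_ae_restrict_of_subset hsub hdom
      have hgi : IntervalIntegrable g volume t0 t := hgcont.intervalIntegrable _ _
      have key : |∫ τ in t0..t, f τ| ≤ |∫ τ in t0..t, g τ| := by
        simpa [Real.norm_eq_abs] using intervalIntegral.norm_integral_le_abs_of_norm_le hdom' hgi
      have hgval : ∫ τ in t0..t, g τ
          = Rb ^ (n + 1) * (t - t0) ^ (n + 1) / (Nat.factorial (n + 1) : ℝ) := by
        have : ∫ τ in t0..t, g τ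
            = (Rb ^ (n + 1) / (Nat.factorial n : ℝ)) * ∫ τ in t0..t, (τ - t0) ^ n := by
          rw [← intervalIntegral.integral_const_mul]
          apply intervalIntegral.integral_congr
          intro τ _
          simp only [hg]; ring
        rw [this, integral_sub_pow, div_mul_div_comm, Nat.factorial_succ]
        push_cast
        rw [mul_comm ((n : ℝ) + 1) (Nat.factorial n : ℝ)]
      have hnonneg : 0 ≤ Rb ^ (n + 1) * (t - t0) ^ (n + 1) / (Nat.factorial (n + 1) : ℝ) := by
        have h4 : 0 ≤ t - t0 := by linarith
        positivity
      calc |iterInt m u t0 (i :: w) t| = |∫ τ in t0..t, f τ| := by rfl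
        _ ≤ |∫ τ in t0..t, g τ| := key
        _ = Rb ^ (n + 1) * (t - t0) ^ (n + 1) / (Nat.factorial (n + 1) : ℝ) := by
            rw [hgval, abs_of_nonneg hnonneg]
        _ = Rb ^ (i :: w).length * (t - t0) ^ (i :: w).length
              / (Nat.factorial (i :: w).length : ℝ) := by rfl

/-- Local convergence of Fliess operators.  If `|(c,η)| ≤ K M^{|η|} |η|!`,
`|u_i| ≤ R` a.e. on `[t0, t0+T]`, `R̄ = max R 1`, and `(m+1) M R̄ T < 1`, then for every
`t ∈ [t0, t0+T]` the family `(|(c,η)| |E_η[u](t,t0)|)_η` is summable and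
`|F_c[u](t)| ≤ K / (1 − (m+1) M R̄ (t − t0))`. -/
theorem fliess_local_convergence (m : ℕ) (t0 T K M R : ℝ)
    (hK : 0 < K) (hM : 0 < M) (hT : 0 < T)
    (c : List (Fin (m + 1)) → ℝ)
    (hc : ∀ η : List (Fin (m + 1)),
      |c η| ≤ K * M ^ η.length * (Nat.factorial η.length : ℝ))
    (u : ℝ → Fin m → ℝ) (hmeas : ∀ i, Measurable fun t => u t i)
    (hbd : ∀ i, ∀ᵐ t ∂(volume.restrict (Set.Icc t0 (t0 + T))), |u t i| ≤ R)
    (hsmall : (m + 1 : ℝ) * M * max R 1 * T < 1) :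
    ∀ t ∈ Set.Icc t0 (t0 + T),
      Summable (fun η : List (Fin (m + 1)) => |c η| * |iterInt m u t0 η t|) ∧
      |∑' η : List (Fin (m + 1)), c η * iterInt m u t0 η t| ≤
        K / (1 - (m + 1 : ℝ) * M * max R 1 * (t - t0)) := by
  intro t ht
  have hmain := iterInt_cont_bound m t0 T R hT u hmeas hbd
  set Rb := max R 1 with hRbdef
  have hRb1 : (1 : ℝ) ≤ Rb := le_max_right _ _
  have hRb0 : (0 : ℝ) < Rb := by linarith
  have htt0 : 0 ≤ t - t0 := by linarith [ht.1]
  set q' : ℝ := M * Rb * (t - t0) with hq'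
  set q : ℝ := (m + 1 : ℝ) * M * Rb * (t - t0) with hq
  have hq'0 : 0 ≤ q' := by positivity
  have hq0 : 0 ≤ q := by rw [hq]; positivity
  have hq1 : q < 1 := by
    calc q ≤ (m + 1 : ℝ) * M * Rb * T := by
          apply mul_le_mul_of_nonneg_left (by linarith [ht.2]) (by positivity)
      _ < 1 := hsmall
  have hqq' : ((m : ℝ) + 1) * q' = q := by rw [hq, hq']; ring
  -- per-word bound
  have hword : ∀ η : List (Fin (m + 1)),
      |c η| * |iterInt m u t0 η t| ≤ K * q' ^ η.length := by
    intro η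
    have h1 := hc η
    have h2 := (hmain η).2 t ht
    have hfact : (0 : ℝ) < (Nat.factorial η.length : ℝ) := by positivity
    calc |c η| * |iterInt m u t0 η t|
        ≤ (K * M ^ η.length * (Nat.factorial η.length : ℝ)) *
            (Rb ^ η.length * (t - t0) ^ η.length / (Nat.factorial η.length : ℝ)) :=
          mul_le_mul h1 h2 (abs_nonneg _) (by positivity)
      _ = K * q' ^ η.length := by
          rw [hq', mul_pow, mul_pow]
          field_simp
  clear_value q' q
  -- summability of the dominating geometric family
  set G : (Σ n : ℕ, Fin n → Fin (m + 1)) → ℝ := fun p => K * q' ^ p.1 with hG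
  have hfiber : ∀ n : ℕ, ∑' v : Fin n → Fin (m + 1), G ⟨n, v⟩ = K * q ^ n := by
    intro n
    show ∑' _ : Fin n → Fin (m + 1), K * q' ^ n = K * q ^ n
    rw [tsum_const, Nat.card_eq_fintype_card, Fintype.card_fun, nsmul_eq_mul]
    simp only [Fintype.card_fin]
    push_cast
    rw [← hqq', mul_pow]
    ring
  have hgeo : Summable (fun n : ℕ => K * q ^ n) :=
    (summable_geometric_of_lt_one hq0 hq1).mul_left K
  have hGs : Summable G := by
    apply (summable_sigma_of_nonneg (fun p => by rw [hG]; positivity)).2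
    refine ⟨fun n => (hasSum_fintype _).summable, ?_⟩
    apply Summable.congr hgeo
    exact fun n => (hfiber n).symm
  set e := (List.equivSigmaTuple (α := Fin (m + 1)))
  set F : List (Fin (m + 1)) → ℝ := fun η => K * q' ^ η.length with hF
  have hFe : F = G ∘ e := rfl
  have hFs : Summable F := by rw [hFe]; exact e.summable_iff.mpr hGs
  have hFsum : ∑' η, F η = K / (1 - q) := by
    have h1 : ∑' η, F η = ∑' p, G p := by rw [hFe]; exact e.tsum_eq G
    rw [h1, Summable.tsum_sigma hGs]
    have h2 : ∑' (n : ℕ), ∑' v : Fin n → Fin (m + 1), G ⟨n, v⟩ = ∑' n : ℕ, K * q ^ n :=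
      tsum_congr hfiber
    rw [h2, tsum_mul_left, tsum_geometric_of_lt_one hq0 hq1, div_eq_mul_inv]
  have hsum1 : Summable (fun η : List (Fin (m + 1)) => |c η| * |iterInt m u t0 η t|) :=
    Summable.of_nonneg_of_le (fun η => by positivity) hword hFs
  refine ⟨hsum1, ?_⟩
  have habs : Summable (fun η : List (Fin (m + 1)) => |c η * iterInt m u t0 η t|) := by
    simpa [abs_mul] using hsum1
  calc |∑' η : List (Fin (m + 1)), c η * iterInt m u t0 η t|
      ≤ ∑' η : List (Fin (m + 1)), |c η * iterInt m u t0 η t| := by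
        have hn : Summable (fun η : List (Fin (m + 1)) => ‖c η * iterInt m u t0 η t‖) := by
          simpa only [Real.norm_eq_abs] using habs
        simpa only [Real.norm_eq_abs] using
          norm_tsum_le_tsum_norm (f := fun η : List (Fin (m + 1)) => c η * iterInt m u t0 η t) hn
    _ = ∑' η : List (Fin (m + 1)), |c η| * |iterInt m u t0 η t| :=
        tsum_congr fun η => abs_mul _ _
    _ ≤ ∑' η, F η := Summable.tsum_le_tsum hword hsum1 hFs
    _ = K / (1 - q) := hFsum
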